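/- Let f ∈ ℂ[x,y] be a polynomial of total degree n ≥ 1 whose coefficient of yⁿ is nonzero. Then there exist constants c > 0 and R₀ > 0 such that every (x,y) ∈ ℂ² with f(x,y) = 0 and ‖(x,y)‖ > R₀ satisfies |y| ≤ c·|x|. -/

import Mathlib

open MvPolynomial Set
open scoped ENNReal

noncomputable section

abbrev Plane : Type := EuclideanSpace ℂ (Fin 2)

abbrev ProjPlane : Type := Projectivization ℂ (Fin 3 → ℂ)

def curve (f : MvPolynomial (Fin 2) ℂ) : Set Plane :=
  {p | MvPolynomial.eval (fun i => p i) f = 0}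

def leadingForm (f : MvPolynomial (Fin 2) ℂ) : MvPolynomial (Fin 2) ℂ :=
  MvPolynomial.homogeneousComponent f.totalDegree f

def homogenize (f : MvPolynomial (Fin 2) ℂ) : MvPolynomial (Fin 3) ℂ :=
  f.support.sum fun m =>
    MvPolynomial.monomial
      (Finsupp.single 0 (m 0) + Finsupp.single 1 (m 1) +
        Finsupp.single 2 (f.totalDegree - (m 0 + m 1))) (f.coeff m)

instance : TopologicalSpace ProjPlane :=
  @instTopologicalSpaceQuotient { v : Fin 3 → ℂ // v ≠ 0 }
    (projectivizationSetoid ℂ (Fin 3 → ℂ)) inferInstance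

def projZeros (F : MvPolynomial (Fin 3) ℂ) : Set ProjPlane :=
  {q | MvPolynomial.eval q.rep F = 0}

def lineAtInfinity : Set ProjPlane :=
  {q | q.rep 2 = 0}

def projClosure (f : MvPolynomial (Fin 2) ℂ) : Set ProjPlane :=
  projZeros (homogenize f)

def pointsAtInfinity (f : MvPolynomial (Fin 2) ℂ) : Set ProjPlane :=
  projClosure f ∩ lineAtInfinity

def singularPoints (F : MvPolynomial (Fin 3) ℂ) : Set ProjPlane :=
  {q | MvPolynomial.eval q.rep F = 0 ∧
    ∀ i : Fin 3, MvPolynomial.eval q.rep (MvPolynomial.pderiv i F) = 0}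

def SameTopType {X Y : Type*} [TopologicalSpace X] [TopologicalSpace Y]
    (A : Set X) (p : X) (B : Set Y) (q : Y) : Prop :=
  ∃ (U : Set X) (V : Set Y), IsOpen U ∧ IsOpen V ∧
    ∃ (hp : p ∈ U) (_ : q ∈ V) (h : U ≃ₜ V),
      (h ⟨p, hp⟩ : Y) = q ∧ ∀ x : U, (x : X) ∈ A ↔ (h x : Y) ∈ B

def IsBilipschitz {X Y : Type*} [MetricSpace X] [MetricSpace Y] (h : X → Y) : Prop :=
  Function.Bijective h ∧ ∃ c : ℝ, 0 < c ∧ ∀ x y : X,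
    (1 / c) * dist x y ≤ dist (h x) (h y) ∧ dist (h x) (h y) ≤ c * dist x y

def BilipschitzEquivAtInfinity (X Y : Set Plane) : Prop :=
  ∃ (K K' : Set Plane), IsCompact K ∧ IsCompact K' ∧
    ∃ h : (X \ K : Set Plane) → (Y \ K' : Set Plane), IsBilipschitz h


lemma term_bound7 (X Y : ℝ) (hX : 0 ≤ X) (hY : 1 ≤ Y) (hXY : X ≤ Y)
    (n a b : ℕ) (hab : a + b ≤ n) (hne : ¬(a = 0 ∧ b = n)) :
    X ^ a * Y ^ b ≤ (X + 1) * Y ^ (n - 1) := by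
  have hY0 : (0:ℝ) ≤ Y := by linarith
  rcases Nat.eq_zero_or_pos a with h0 | hpos
  · subst h0
    have hb : b ≤ n - 1 := by omega
    have h1 : Y ^ b ≤ Y ^ (n - 1) := pow_le_pow_right₀ hY hb
    have h2 : (0:ℝ) ≤ Y ^ (n - 1) := pow_nonneg hY0 _
    nlinarith
  · have h1 : X ^ a ≤ X * Y ^ (a - 1) := by
      calc X ^ a = X * X ^ (a - 1) := by
            rw [← pow_succ']; congr 1; omega
        _ ≤ X * Y ^ (a - 1) := by
            gcongr
    have h3 : Y ^ (a - 1) * Y ^ b = Y ^ (a - 1 + b) := (pow_add Y _ _).symm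
    have h4 : Y ^ (a - 1 + b) ≤ Y ^ (n - 1) := pow_le_pow_right₀ hY (by omega)
    have h5 : (0:ℝ) ≤ Y ^ b := pow_nonneg hY0 _
    have h6 : (0:ℝ) ≤ Y ^ (n-1) := pow_nonneg hY0 _
    calc X ^ a * Y ^ b ≤ (X * Y ^ (a-1)) * Y ^ b := by gcongr
      _ = X * Y ^ (a - 1 + b) := by rw [mul_assoc, h3]
      _ ≤ X * Y ^ (n - 1) := by gcongr
      _ ≤ (X + 1) * Y ^ (n - 1) := by nlinarith

set_option maxHeartbeats 1000000 in
theorem stmt7 (f : MvPolynomial (Fin 2) ℂ) (n : ℕ) (hn : 1 ≤ n)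
    (hdeg : f.totalDegree = n)
    (hcoeff : MvPolynomial.coeff (Finsupp.single (1 : Fin 2) n) f ≠ 0) :
    ∃ c > (0:ℝ), ∃ R₀ > (0:ℝ), ∀ p : Plane,
      MvPolynomial.eval (fun i => p i) f = 0 → R₀ < ‖p‖ → ‖p 1‖ ≤ c * ‖p 0‖ := by
  classical
  set s : Fin 2 →₀ ℕ := Finsupp.single 1 n with hs
  set a : ℝ := ‖f.coeff s‖ with ha
  have ha0 : 0 < a := norm_pos_iff.mpr hcoeff
  set C : ℝ := ∑ m ∈ f.support.erase s, ‖f.coeff m‖ with hC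
  have hC0 : 0 ≤ C := Finset.sum_nonneg fun m _ => norm_nonneg _
  have hca : 0 ≤ 2 * C / a := by positivity
  refine ⟨2 * C / a + 1, by linarith, 2 * (2 * C / a + 2), by linarith, ?_⟩
  intro p hf hR
  set X := ‖p 0‖ with hX
  set Y := ‖p 1‖ with hY
  have hX0 : 0 ≤ X := norm_nonneg _
  have hY0 : 0 ≤ Y := norm_nonneg _
  by_cases hxy : Y ≤ X
  · nlinarith
  push_neg at hxy
  -- ‖p‖ ≤ X + Y
  have hnormp : ‖p‖ ≤ X + Y := by
    rw [EuclideanSpace.norm_eq]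
    rw [show (∑ i, ‖p i‖ ^ 2) = X ^ 2 + Y ^ 2 from by
      rw [Fin.sum_univ_two]]
    have : Real.sqrt (X ^ 2 + Y ^ 2) ≤ Real.sqrt ((X + Y) ^ 2) := by
      apply Real.sqrt_le_sqrt; nlinarith
    calc Real.sqrt (X ^ 2 + Y ^ 2) ≤ Real.sqrt ((X + Y) ^ 2) := this
      _ = X + Y := by rw [Real.sqrt_sq (by linarith)]
  have hYlarge : 2 * C / a + 2 < Y := by linarith
  have hY1 : 1 ≤ Y := by linarith
  have hsmem : s ∈ f.support := MvPolynomial.mem_support_iff.mpr hcoeff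
  -- expansion of eval
  have he : (0:ℂ) = ∑ m ∈ f.support, f.coeff m * ((p 0) ^ (m 0) * (p 1) ^ (m 1)) := by
    rw [← hf, MvPolynomial.eval_eq']
    refine Finset.sum_congr rfl fun m _ => ?_
    rw [Fin.prod_univ_two]
  have hsplit : f.coeff s * ((p 0) ^ (s 0) * (p 1) ^ (s 1))
      = - ∑ m ∈ f.support.erase s, f.coeff m * ((p 0) ^ (m 0) * (p 1) ^ (m 1)) := by
    have := Finset.add_sum_erase f.support
      (fun m => f.coeff m * ((p 0) ^ (m 0) * (p 1) ^ (m 1))) hsmem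
    rw [← this] at he
    linear_combination -he
  have hs0 : s 0 = 0 := by simp [hs]
  have hs1 : s 1 = n := by simp [hs]
  -- key estimate
  have key : a * Y ^ n ≤ C * ((X + 1) * Y ^ (n - 1)) := by
    have lhs_eq : a * Y ^ n = ‖f.coeff s * ((p 0) ^ (s 0) * (p 1) ^ (s 1))‖ := by
      rw [hs0, hs1]
      simp [ha, norm_mul, norm_pow, hY]
    rw [lhs_eq, hsplit, norm_neg]
    calc ‖∑ m ∈ f.support.erase s, f.coeff m * ((p 0) ^ (m 0) * (p 1) ^ (m 1))‖
        ≤ ∑ m ∈ f.support.erase s, ‖f.coeff m * ((p 0) ^ (m 0) * (p 1) ^ (m 1))‖ :=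
          norm_sum_le _ _
      _ ≤ ∑ m ∈ f.support.erase s, ‖f.coeff m‖ * ((X + 1) * Y ^ (n - 1)) := by
          refine Finset.sum_le_sum fun m hm => ?_
          rw [norm_mul, norm_mul, norm_pow, norm_pow]
          refine mul_le_mul_of_nonneg_left ?_ (norm_nonneg _)
          have hmS : m ∈ f.support := Finset.mem_of_mem_erase hm
          have hmne : m ≠ s := Finset.ne_of_mem_erase hm
          have hdegm : m 0 + m 1 ≤ n := by
            have h1 := MvPolynomial.le_totalDegree hmS
            rw [hdeg] at h1
            have h2 : (m.sum fun _ e => e) = m 0 + m 1 := by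
              rw [Finsupp.sum_fintype _ _ (fun _ => rfl), Fin.sum_univ_two]
            omega
          refine term_bound7 X Y hX0 hY1 (le_of_lt hxy) n (m 0) (m 1) hdegm ?_
          rintro ⟨h0, h1⟩
          apply hmne
          ext i
          fin_cases i
          · simpa [hs0] using h0
          · simpa [hs1] using h1
      _ = C * ((X + 1) * Y ^ (n - 1)) := by rw [← Finset.sum_mul]
  -- divide by Y^(n-1)
  have hYn : Y ^ n = Y * Y ^ (n - 1) := by
    rw [← pow_succ']; congr 1; omega
  have hYpow : 0 < Y ^ (n - 1) := by positivity
  have key2 : a * Y ≤ C * (X + 1) := by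
    rw [hYn] at key
    have := (mul_le_mul_iff_of_pos_right hYpow).mp (by linarith [key] : (a * Y) * Y ^ (n-1) ≤ (C * (X + 1)) * Y ^ (n-1))
    exact this
  by_cases hx1 : X < 1
  · exfalso
    have : a * Y ≤ 2 * C := by nlinarith
    have hY2 : Y ≤ 2 * C / a := by
      rw [le_div_iff₀ ha0]; linarith
    linarith
  · push_neg at hx1
    have h1 : a * Y ≤ 2 * C * X := by nlinarith
    have h2 : Y ≤ 2 * C / a * X := by
      rw [div_mul_eq_mul_div, le_div_iff₀ ha0]; nlinarith
    nlinarith
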